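/- Let β = (β₀,β₁,β₂,β₃) ∈ ℂ⁴ and let λ, t ∈ ℂ with λ ≠ 0 and t ≠ 0. Then λ⁶·t³·N_{(β₁,β₀,β₂,β₃)}(1/λ, 1/t) = −N_{(β₀,β₁,β₂,β₃)}(λ, t). In particular, (λ,t) lies on the curve N_{(β₀,β₁,β₂,β₃)} = 0 if and only if (1/λ, 1/t) lies on the curve N_{(β₁,β₀,β₂,β₃)} = 0 (this is the action of the symmetry x² : s ↦ 1/s of the Painlevé VI equation on the curves Γ_β). -/
import Mathlib


/-- The value `N_β(λ,t)` of the defining polynomial of the curve `Γ_β`. -/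
def Nval (β : Fin 4 → ℂ) (l t : ℂ) : ℂ :=
  β 0 * l ^ 2 * (l - 1) ^ 2 * (l - t) ^ 2
    - β 1 * t * (l - 1) ^ 2 * (l - t) ^ 2
    + β 2 * (t - 1) * l ^ 2 * (l - t) ^ 2
    - β 3 * t * (t - 1) * l ^ 2 * (l - 1) ^ 2

theorem stmt18 (β : Fin 4 → ℂ) (l t : ℂ) (hl : l ≠ 0) (ht : t ≠ 0) :
    l ^ 6 * t ^ 3 * Nval ![β 1, β 0, β 2, β 3] (1 / l) (1 / t) = -Nval β l t ∧
    (Nval β l t = 0 ↔ Nval ![β 1, β 0, β 2, β 3] (1 / l) (1 / t) = 0) := by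
  have key : l ^ 6 * t ^ 3 * Nval ![β 1, β 0, β 2, β 3] (1 / l) (1 / t) = -Nval β l t := by
    simp only [Nval, Matrix.cons_val_zero, Matrix.cons_val_one, Matrix.head_cons,
      Matrix.cons_val_two, Matrix.tail_cons, Matrix.cons_val_three]
    have e1 : (1/l : ℂ) - 1 = (1 - l)/l := by field_simp
    have e2 : (1/l : ℂ) - 1/t = (t - l)/(l*t) := by
      rw [div_sub_div _ _ hl ht, one_mul, mul_one]
    have e3 : (1/t : ℂ) - 1 = (1 - t)/t := by field_simp
    rw [e1, e2, e3]
    have t1 : l^6*t^3*(β 1 * (1/l)^2 * ((1-l)/l)^2 * ((t-l)/(l*t))^2)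
        = β 1 * t * (l-1)^2 * (l-t)^2 := by field_simp; ring
    have t2 : l^6*t^3*(β 0 * (1/t) * ((1-l)/l)^2 * ((t-l)/(l*t))^2)
        = β 0 * l^2 * (l-1)^2 * (l-t)^2 := by field_simp; ring
    have t3 : l^6*t^3*(β 2 * ((1-t)/t) * (1/l)^2 * ((t-l)/(l*t))^2)
        = -(β 2 * (t-1) * l^2 * (l-t)^2) := by field_simp; ring
    have t4 : l^6*t^3*(β 3 * (1/t) * ((1-t)/t) * (1/l)^2 * ((1-l)/l)^2)
        = -(β 3 * t * (t-1) * l^2 * (l-1)^2) := by field_simp; ring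
    linear_combination t1 - t2 + t3 - t4
  refine ⟨key, ?_⟩
  constructor
  · intro h
    have : l ^ 6 * t ^ 3 * Nval ![β 1, β 0, β 2, β 3] (1 / l) (1 / t) = 0 := by rw [key, h, neg_zero]
    have h6 : l ^ 6 ≠ 0 := pow_ne_zero _ hl
    have h3 : t ^ 3 ≠ 0 := pow_ne_zero _ ht
    rcases mul_eq_zero.mp this with h' | h'
    · rcases mul_eq_zero.mp h' with h'' | h'' <;> simp_all
    · exact h'
  · intro h
    have h2 : -Nval β l t = 0 := by rw [← key, h, mul_zero]
    exact neg_eq_zero.mp h2
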